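/- Let ℓ : ℝ^d → ℝ be convex and G-Lipschitz and let r > 0. Then ℓ is differentiable Lebesgue-almost everywhere, and for any measurable function g : ℝ^d → ℝ^d that agrees with the gradient ∇ℓ at every point where ℓ is differentiable, the r-smoothing ℓ̂ is differentiable with ∇ℓ̂(θ) = ∫ g(θ + y) dμ_r(y) for every θ ∈ ℝ^d. -/

import Mathlib

open MeasureTheory
open scoped InnerProductSpace

/-- The uniform probability measure on the closed Euclidean ball of radius `r`
centered at the origin in `ℝ^d`. -/
noncomputable def uniformBall (d : ℕ) (r : ℝ) : Measure (EuclideanSpace ℝ (Fin d)) :=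
  (volume (Metric.closedBall (0 : EuclideanSpace ℝ (Fin d)) r))⁻¹ •
    volume.restrict (Metric.closedBall (0 : EuclideanSpace ℝ (Fin d)) r)

/-- The `r`-smoothing of `ℓ`: the average of `ℓ` over the ball of radius `r` around the point. -/
noncomputable def smoothed {d : ℕ} (ℓ : EuclideanSpace ℝ (Fin d) → ℝ) (r : ℝ)
    (θ : EuclideanSpace ℝ (Fin d)) : ℝ :=
  ∫ y, ℓ (θ + y) ∂(uniformBall d r)

set_option maxHeartbeats 1000000 in
theorem stmt10 {d : ℕ} (ℓ : EuclideanSpace ℝ (Fin d) → ℝ) (G : ℝ) (hG : 0 ≤ G)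
    (hconv : ConvexOn ℝ Set.univ ℓ)
    (hlip : ∀ u v, |ℓ u - ℓ v| ≤ G * ‖u - v‖)
    (r : ℝ) (hr : 0 < r) :
    (∀ᵐ θ ∂(volume : Measure (EuclideanSpace ℝ (Fin d))), DifferentiableAt ℝ ℓ θ) ∧
    ∀ g : EuclideanSpace ℝ (Fin d) → EuclideanSpace ℝ (Fin d), Measurable g →
      (∀ θ, DifferentiableAt ℝ ℓ θ → g θ = gradient ℓ θ) →
      ∀ θ, DifferentiableAt ℝ (smoothed ℓ r) θ ∧
        gradient (smoothed ℓ r) θ = ∫ y, g (θ + y) ∂(uniformBall d r) := by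
  classical
  have hL : LipschitzWith (Real.toNNReal G) ℓ := by
    apply LipschitzWith.of_dist_le_mul
    intro u v
    simpa [Real.dist_eq, dist_eq_norm, Real.coe_toNNReal G hG] using hlip u v
  have hae : ∀ᵐ z ∂(volume : Measure (EuclideanSpace ℝ (Fin d))), DifferentiableAt ℝ ℓ z :=
    hL.ae_differentiableAt
  refine ⟨hae, ?_⟩
  intro g hgmeas hgrad θ
  set μ : Measure (EuclideanSpace ℝ (Fin d)) := uniformBall d r with hμdef
  -- basic facts about the measure
  have h0 : volume (Metric.closedBall (0 : EuclideanSpace ℝ (Fin d)) r) ≠ 0 :=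
    (Metric.measure_closedBall_pos volume 0 hr).ne'
  have htop : volume (Metric.closedBall (0 : EuclideanSpace ℝ (Fin d)) r) ≠ ⊤ :=
    (isCompact_closedBall _ _).measure_lt_top.ne
  have hprob : IsProbabilityMeasure μ := by
    constructor
    simp [hμdef, uniformBall, Measure.smul_apply, Measure.restrict_apply_univ, smul_eq_mul,
      ENNReal.inv_mul_cancel h0 htop]
  haveI := hprob
  have hac : μ ≪ (volume : Measure (EuclideanSpace ℝ (Fin d))) := by
    rw [hμdef, uniformBall]
    exact Measure.smul_absolutelyContinuous.trans
      (Measure.absolutelyContinuous_of_le Measure.restrict_le_self)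
  -- integrability of translates of ℓ
  have hint_l : ∀ c : EuclideanSpace ℝ (Fin d), Integrable (fun y => ℓ (c + y)) μ := by
    intro c
    rw [hμdef, uniformBall]
    refine Integrable.smul_measure ?_ (ENNReal.inv_ne_top.2 h0)
    exact ((hL.continuous.comp (continuous_const.add continuous_id)).continuousOn).integrableOn_compact
      (isCompact_closedBall _ _)
  -- a.e. differentiability at translated points
  have haeT : ∀ c : EuclideanSpace ℝ (Fin d), ∀ᵐ y ∂μ, DifferentiableAt ℝ ℓ (c + y) := by
    intro c
    have hv : ∀ᵐ y ∂(volume : Measure (EuclideanSpace ℝ (Fin d))),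
        DifferentiableAt ℝ ℓ (c + y) := by
      rw [ae_iff] at hae ⊢
      have he : {y | ¬ DifferentiableAt ℝ ℓ (c + y)} =
          (fun y => c + y) ⁻¹' {z | ¬ DifferentiableAt ℝ ℓ z} := rfl
      rw [he, measure_preimage_add]
      exact hae
    exact hv.filter_mono hac.ae_le
  -- gradient norm bound and inner product formula
  have hgradnorm : ∀ z, DifferentiableAt ℝ ℓ z → ‖gradient ℓ z‖ ≤ G := by
    intro z _
    rw [gradient, LinearIsometryEquiv.norm_map]
    calc ‖fderiv ℝ ℓ z‖ ≤ Real.toNNReal G := norm_fderiv_le_of_lipschitz ℝ hL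
    _ = G := Real.coe_toNNReal G hG
  have hinner : ∀ z, ∀ w, ⟪gradient ℓ z, w⟫_ℝ = fderiv ℝ ℓ z w := by
    intro z w
    rw [gradient, ← InnerProductSpace.toDual_apply_apply, LinearIsometryEquiv.apply_symm_apply]
  have hgbound : ∀ c, ∀ᵐ y ∂μ, ‖g (c + y)‖ ≤ G := by
    intro c
    filter_upwards [haeT c] with y hy
    rw [hgrad _ hy]
    exact hgradnorm _ hy
  -- integrability of g translates
  have hint_g : ∀ c, Integrable (fun y => g (c + y)) μ := by
    intro c
    refine Integrable.mono' (integrable_const G)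
      ((hgmeas.comp (measurable_const_add c)).aestronglyMeasurable) (hgbound c)
  have hint_inner : ∀ c (w : EuclideanSpace ℝ (Fin d)),
      Integrable (fun y => ⟪g (c + y), w⟫_ℝ) μ := fun c w => (hint_g c).inner_const w
  -- subgradient inequality
  have hsubgrad : ∀ z, DifferentiableAt ℝ ℓ z → ∀ w, ℓ z + fderiv ℝ ℓ z w ≤ ℓ (z + w) := by
    intro z hz w
    have hq : ConvexOn ℝ Set.univ (fun t : ℝ => ℓ (z + t • w)) := by
      have hcomp := hconv.comp_affineMap (AffineMap.lineMap (k := ℝ) z (z + w))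
      simpa [Function.comp_def, AffineMap.lineMap_apply, add_sub_cancel_left, add_comm] using hcomp
    have line : HasDerivAt (fun t : ℝ => z + t • w) w 0 := by
      simpa using ((hasDerivAt_id (0:ℝ)).smul_const w).const_add z
    have hd : HasDerivAt (fun t : ℝ => ℓ (z + t • w)) (fderiv ℝ ℓ z w) 0 := by
      have hz' : HasFDerivAt ℓ (fderiv ℝ ℓ z) (z + (0:ℝ) • w) := by simpa using hz.hasFDerivAt
      exact hz'.comp_hasDerivAt 0 line
    have hs := hq.le_slope_of_hasDerivAt (Set.mem_univ (0:ℝ)) (Set.mem_univ 1) one_pos hd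
    simp [slope_def_field] at hs
    linarith
  -- the candidate gradient and the error function
  set v : EuclideanSpace ℝ (Fin d) := ∫ y, g (θ + y) ∂μ with hvdef
  set φ : EuclideanSpace ℝ (Fin d) → ℝ :=
    fun h => smoothed ℓ r (θ + h) - smoothed ℓ r θ - ⟪v, h⟫_ℝ with hφdef
  have hsm_eq : ∀ x, smoothed ℓ r x = ∫ y, ℓ (x + y) ∂μ := fun x => rfl
  have φ_eq : ∀ h, φ h = ∫ y, (ℓ (θ + h + y) - ℓ (θ + y) - ⟪g (θ + y), h⟫_ℝ) ∂μ := by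
    intro h
    have hv : ⟪v, h⟫_ℝ = ∫ y, ⟪g (θ + y), h⟫_ℝ ∂μ := by
      rw [hvdef, real_inner_comm, ← integral_inner (hint_g θ) h]
      simp_rw [real_inner_comm]
    have hA : Integrable (fun y => ℓ (θ + h + y) - ℓ (θ + y)) μ :=
      (hint_l (θ + h)).sub (hint_l θ)
    rw [hφdef]
    simp only
    rw [hsm_eq, hsm_eq, hv, integral_sub hA (hint_inner θ h),
      integral_sub (hint_l (θ + h)) (hint_l θ)]
  have hφ0 : φ 0 = 0 := by simp [hφdef]
  have hφnonneg : ∀ h, 0 ≤ φ h := by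
    intro h
    rw [φ_eq]
    refine integral_nonneg_of_ae ?_
    filter_upwards [haeT θ] with y hy
    simp only [Pi.zero_apply]
    have hsg := hsubgrad _ hy h
    have harr : θ + h + y = (θ + y) + h := by abel
    have hi : ⟪g (θ + y), h⟫_ℝ = fderiv ℝ ℓ (θ + y) h := by rw [hgrad _ hy, hinner]
    rw [harr, hi]
    linarith
  -- convexity of the smoothed function and of φ
  have hsmconv : ConvexOn ℝ Set.univ (smoothed ℓ r) := by
    refine ⟨convex_univ, ?_⟩
    intro x _ y _ a b ha hb hab
    obtain rfl : b = 1 - a := by linarith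
    have hptwise : ∀ z, ℓ (a • x + (1 - a) • y + z) ≤ a * ℓ (x + z) + (1 - a) * ℓ (y + z) := by
      intro z
      have := hconv.2 (Set.mem_univ (x + z)) (Set.mem_univ (y + z)) ha hb hab
      have he : a • (x + z) + (1 - a) • (y + z) = a • x + (1 - a) • y + z := by
        module
      rw [he] at this
      simpa using this
    calc smoothed ℓ r (a • x + (1 - a) • y) = ∫ z, ℓ (a • x + (1 - a) • y + z) ∂μ := hsm_eq _
    _ ≤ ∫ z, (a * ℓ (x + z) + (1 - a) * ℓ (y + z)) ∂μ := by
        refine integral_mono (hint_l _)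
          (((hint_l x).const_mul a).add ((hint_l y).const_mul (1 - a))) hptwise
    _ = a • smoothed ℓ r x + (1 - a) • smoothed ℓ r y := by
        rw [integral_add ((hint_l x).const_mul a) ((hint_l y).const_mul (1 - a)),
          integral_const_mul, integral_const_mul, hsm_eq x, hsm_eq y]
        simp [smul_eq_mul]
  have hφconv : ConvexOn ℝ Set.univ φ := by
    refine ⟨convex_univ, ?_⟩
    intro x _ y _ a b ha hb hab
    obtain rfl : b = 1 - a := by linarith
    have h1 : θ + (a • x + (1 - a) • y) = a • (θ + x) + (1 - a) • (θ + y) := by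
      module
    have h2 := hsmconv.2 (Set.mem_univ (θ + x)) (Set.mem_univ (θ + y)) ha hb hab
    simp only [smul_eq_mul] at h2
    simp only [hφdef, smul_eq_mul, h1]
    rw [inner_add_right, real_inner_smul_right, real_inner_smul_right]
    nlinarith [h2]
  -- Lipschitz bound for the smoothed function
  have hsmlip : ∀ a b, |smoothed ℓ r a - smoothed ℓ r b| ≤ G * ‖a - b‖ := by
    intro a b
    rw [hsm_eq, hsm_eq, ← integral_sub (hint_l a) (hint_l b)]
    calc |∫ y, (ℓ (a + y) - ℓ (b + y)) ∂μ|
        ≤ ∫ y, |ℓ (a + y) - ℓ (b + y)| ∂μ := by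
          simpa using norm_integral_le_integral_norm (μ := μ) (fun y => ℓ (a + y) - ℓ (b + y))
    _ ≤ ∫ _y, G * ‖a - b‖ ∂μ := by
        refine integral_mono ((hint_l a).sub (hint_l b)).abs (integrable_const _) ?_
        intro y
        simpa [add_sub_add_right_eq_sub] using hlip (a + y) (b + y)
    _ = G * ‖a - b‖ := by simp
  have hφcont : Continuous φ := by
    have hlipsm : LipschitzWith (Real.toNNReal G) (smoothed ℓ r) := by
      apply LipschitzWith.of_dist_le_mul
      intro a b
      simpa [Real.dist_eq, dist_eq_norm, Real.coe_toNNReal G hG] using hsmlip a b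
    exact ((hlipsm.continuous.comp (continuous_const.add continuous_id)).sub
      continuous_const).sub (continuous_const.inner continuous_id)
  -- scaling inequality from convexity
  have hφscale : ∀ (u : EuclideanSpace ℝ (Fin d)) (s t : ℝ), 0 < s → s ≤ t →
      φ (s • u) / s ≤ φ (t • u) / t := by
    intro u s t hs hst
    have ht : 0 < t := hs.trans_le hst
    have ha : (0:ℝ) ≤ s / t := by positivity
    have hb : (0:ℝ) ≤ 1 - s / t := by
      have : s / t ≤ 1 := (div_le_one ht).2 hst
      linarith
    have hab : s / t + (1 - s / t) = 1 := by ring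
    have hc := hφconv.2 (Set.mem_univ (t • u)) (Set.mem_univ (0 : EuclideanSpace ℝ (Fin d)))
      ha hb hab
    have he : (s / t) • (t • u) + (1 - s / t) • (0 : EuclideanSpace ℝ (Fin d)) = s • u := by
      rw [smul_zero, add_zero, smul_smul, div_mul_cancel₀ _ ht.ne']
    rw [he, hφ0] at hc
    simp only [smul_eq_mul, mul_zero, add_zero] at hc
    calc φ (s • u) / s ≤ (s / t * φ (t • u)) / s := (div_le_div_iff_of_pos_right hs).2 hc
    _ = φ (t • u) / t := by
          field_simp
  -- directional derivative of φ at 0 vanishes (dominated convergence)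
  have Dlim : ∀ u : EuclideanSpace ℝ (Fin d),
      Filter.Tendsto (fun t : ℝ => φ (t • u) / t) (nhdsWithin 0 (Set.Ioi 0)) (nhds 0) := by
    intro u
    set F : ℝ → EuclideanSpace ℝ (Fin d) → ℝ :=
      fun t y => (ℓ (θ + y + t • u) - ℓ (θ + y)) / t - ⟪g (θ + y), u⟫_ℝ with hFdef
    have key : ∀ᶠ t in nhdsWithin (0:ℝ) (Set.Ioi 0), φ (t • u) / t = ∫ y, F t y ∂μ := by
      filter_upwards [self_mem_nhdsWithin] with t ht
      rw [φ_eq, ← integral_div]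
      congr 1
      ext y
      have harr : θ + t • u + y = θ + y + t • u := by abel
      rw [hFdef]
      simp only
      have ht' : t ≠ 0 := ne_of_gt ht
      rw [harr, real_inner_smul_right, sub_div, mul_div_cancel_left₀ _ ht']
    have hDC : Filter.Tendsto (fun t : ℝ => ∫ y, F t y ∂μ) (nhdsWithin 0 (Set.Ioi 0))
        (nhds 0) := by
      have h00 : Filter.Tendsto (fun t : ℝ => ∫ y, F t y ∂μ) (nhdsWithin 0 (Set.Ioi 0))
          (nhds (∫ (_y : EuclideanSpace ℝ (Fin d)), (0:ℝ) ∂μ)) := by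
        refine tendsto_integral_filter_of_dominated_convergence (fun _ => G * ‖u‖ + G * ‖u‖)
            ?_ ?_ (integrable_const _) ?_
        · filter_upwards [self_mem_nhdsWithin] with t ht
          refine AEStronglyMeasurable.sub ?_ ?_
          · exact (((hL.continuous.comp ((continuous_const.add continuous_id).add
              continuous_const)).sub (hL.continuous.comp
              (continuous_const.add continuous_id))).div_const t).aestronglyMeasurable
          · exact ((hgmeas.comp (measurable_const_add θ)).inner measurable_const).aestronglyMeasurable
        · filter_upwards [self_mem_nhdsWithin] with t ht
          filter_upwards [hgbound θ] with y hy
          have ht' : (0:ℝ) < t := ht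
          have h1 : |ℓ (θ + y + t • u) - ℓ (θ + y)| ≤ G * (t * ‖u‖) := by
            have := hlip (θ + y + t • u) (θ + y)
            simpa [add_sub_cancel_left, norm_smul, abs_of_pos ht', mul_assoc] using this
          have h2 : |⟪g (θ + y), u⟫_ℝ| ≤ G * ‖u‖ := by
            calc |⟪g (θ + y), u⟫_ℝ| ≤ ‖g (θ + y)‖ * ‖u‖ := abs_real_inner_le_norm _ _
            _ ≤ G * ‖u‖ := by
                have := norm_nonneg u
                nlinarith [norm_nonneg (g (θ + y))]
          have h3 : |(ℓ (θ + y + t • u) - ℓ (θ + y)) / t| ≤ G * ‖u‖ := by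
            rw [abs_div, abs_of_pos ht', div_le_iff₀ ht']
            calc |ℓ (θ + y + t • u) - ℓ (θ + y)| ≤ G * (t * ‖u‖) := h1
            _ = G * ‖u‖ * t := by ring
          calc ‖F t y‖ = |(ℓ (θ + y + t • u) - ℓ (θ + y)) / t - ⟪g (θ + y), u⟫_ℝ| := rfl
          _ ≤ |(ℓ (θ + y + t • u) - ℓ (θ + y)) / t| + |⟪g (θ + y), u⟫_ℝ| := abs_sub _ _
          _ ≤ G * ‖u‖ + G * ‖u‖ := add_le_add h3 h2
        · filter_upwards [haeT θ] with y hy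
          set z := θ + y with hzdef
          have line : HasDerivAt (fun t : ℝ => z + t • u) u 0 := by
            simpa using ((hasDerivAt_id (0:ℝ)).smul_const u).const_add z
          have hz' : HasFDerivAt ℓ (fderiv ℝ ℓ z) (z + (0:ℝ) • u) := by simpa using hy.hasFDerivAt
          have hd : HasDerivAt (fun t : ℝ => ℓ (z + t • u)) (fderiv ℝ ℓ z u) 0 := by
            exact hz'.comp_hasDerivAt 0 line
          have hslope := hasDerivAt_iff_tendsto_slope.1 hd
          have hslope' : Filter.Tendsto (slope (fun t : ℝ => ℓ (z + t • u)) 0)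
              (nhdsWithin 0 (Set.Ioi 0)) (nhds (fderiv ℝ ℓ z u)) :=
            hslope.mono_left (nhdsWithin_mono _ (fun x hx => ne_of_gt hx))
          have hFt : (fun t => F t y) =ᶠ[nhdsWithin (0:ℝ) (Set.Ioi 0)]
              (fun t => slope (fun s : ℝ => ℓ (z + s • u)) 0 t - ⟪g z, u⟫_ℝ) := by
            filter_upwards [self_mem_nhdsWithin] with t ht
            rw [hFdef]
            simp only
            rw [slope_def_field]
            rw [hzdef]
            simp only [zero_smul, add_zero]
            ring_nf
          have hlim0 : fderiv ℝ ℓ z u - ⟪g z, u⟫_ℝ = 0 := by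
            rw [hgrad _ hy, hinner]
            ring
          have hsub : Filter.Tendsto
              (fun t : ℝ => slope (fun s : ℝ => ℓ (z + s • u)) 0 t - ⟪g z, u⟫_ℝ)
              (nhdsWithin 0 (Set.Ioi 0)) (nhds (fderiv ℝ ℓ z u - ⟪g z, u⟫_ℝ)) :=
            hslope'.sub tendsto_const_nhds
          rw [hlim0] at hsub
          exact Filter.Tendsto.congr' (Filter.EventuallyEq.symm hFt) hsub
      simpa using h00
    exact Filter.Tendsto.congr' (Filter.EventuallyEq.symm key) hDC
  -- the key smallness estimate
  have hsmall : ∀ ε : ℝ, 0 < ε → ∃ δ : ℝ, 0 < δ ∧ ∀ h : EuclideanSpace ℝ (Fin d),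
      ‖h‖ < δ → φ h ≤ ε * ‖h‖ := by
    intro ε hε
    by_contra hcon
    push_neg at hcon
    have hcon' : ∀ n : ℕ, ∃ h : EuclideanSpace ℝ (Fin d),
        ‖h‖ < 1 / (n + 1) ∧ ε * ‖h‖ < φ h := by
      intro n
      obtain ⟨h, hh1, hh2⟩ := hcon (1 / (n + 1)) (by positivity)
      exact ⟨h, hh1, hh2⟩
    choose hf hf1 hf2 using hcon'
    have hne : ∀ n, hf n ≠ 0 := by
      intro n h0
      have := hf2 n
      rw [h0] at this
      simp [hφ0] at this
    set u : ℕ → EuclideanSpace ℝ (Fin d) := fun n => ‖hf n‖⁻¹ • hf n with hudef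
    have hu : ∀ n, u n ∈ Metric.sphere (0 : EuclideanSpace ℝ (Fin d)) 1 := by
      intro n
      simp [hudef, norm_smul, inv_mul_cancel₀ (norm_ne_zero_iff.2 (hne n))]
    obtain ⟨uoo, _, σ, hσ, hσtend⟩ :=
      (isCompact_sphere (0 : EuclideanSpace ℝ (Fin d)) 1).tendsto_subseq hu
    have hhn : Filter.Tendsto (fun n => ‖hf (σ n)‖) Filter.atTop (nhds 0) := by
      have hb : ∀ n : ℕ, ‖hf (σ n)‖ ≤ 1 / (n + 1) := by
        intro n
        refine (hf1 (σ n)).le.trans (one_div_le_one_div_of_le (by positivity) ?_)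
        exact_mod_cast Nat.succ_le_succ hσ.le_apply
      exact squeeze_zero (fun n => norm_nonneg _) hb tendsto_one_div_add_atTop_nhds_zero_nat
    have hkey : ∀ t : ℝ, 0 < t → ε * t ≤ φ (t • uoo) := by
      intro t ht
      have hev : ∀ᶠ n in Filter.atTop, ε * t ≤ φ (t • u (σ n)) := by
        have hevle : ∀ᶠ n in Filter.atTop, ‖hf (σ n)‖ ≤ t :=
          hhn.eventually_le_const ht
        filter_upwards [hevle] with n hn
        have hpos : 0 < ‖hf (σ n)‖ := norm_pos_iff.2 (hne (σ n))
        have hsc := hφscale (u (σ n)) ‖hf (σ n)‖ t hpos hn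
        have hrec : ‖hf (σ n)‖ • u (σ n) = hf (σ n) := by
          rw [hudef]
          simp only
          rw [smul_smul, mul_inv_cancel₀ hpos.ne', one_smul]
        rw [hrec] at hsc
        have h1 : ε < φ (hf (σ n)) / ‖hf (σ n)‖ := (lt_div_iff₀ hpos).2 (by linarith [hf2 (σ n)])
        have h2 : ε < φ (t • u (σ n)) / t := lt_of_lt_of_le h1 hsc
        rw [lt_div_iff₀ ht] at h2
        linarith
      have htt : Filter.Tendsto (fun n => φ (t • u (σ n))) Filter.atTop (nhds (φ (t • uoo))) :=
        (hφcont.tendsto _).comp (hσtend.const_smul t)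
      exact ge_of_tendsto htt hev
    have h2 : ∀ᶠ t in nhdsWithin (0:ℝ) (Set.Ioi 0), ε ≤ φ (t • uoo) / t := by
      filter_upwards [self_mem_nhdsWithin] with t ht
      exact (le_div_iff₀ ht).2 (by linarith [hkey t ht])
    have := ge_of_tendsto (Dlim uoo) h2
    linarith
  -- conclusion
  have hmain : HasGradientAt (smoothed ℓ r) v θ := by
    rw [hasGradientAt_iff_isLittleO, Asymptotics.isLittleO_iff]
    intro c hc
    obtain ⟨δ, hδ, hsm⟩ := hsmall c hc
    have hball : Metric.ball θ δ ∈ nhds θ := Metric.ball_mem_nhds θ hδ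
    filter_upwards [hball] with x hx
    have hxδ : ‖x - θ‖ < δ := by
      rw [← dist_eq_norm]
      exact hx
    have h1 : smoothed ℓ r x - smoothed ℓ r θ - ⟪v, x - θ⟫_ℝ = φ (x - θ) := by
      rw [hφdef]
      simp [add_sub_cancel]
    rw [Real.norm_eq_abs, h1, abs_of_nonneg (hφnonneg _)]
    exact hsm _ hxδ
  exact ⟨hmain.differentiableAt, hmain.gradient⟩
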